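/- Let p > 3 be a prime, set n = (p-1)/2 and ζ = e^{2πi/p}, and let M be the n × n matrix with first row (1, 1, ..., 1) and (i,j) entry ζ^{i·j²} for 2 ≤ i ≤ n, 1 ≤ j ≤ n. Then det M = ((τ̄_p - 1)/2) · ∏_{1≤j<k≤n} (ζ^{k²} - ζ^{j²}), where τ_p = ∑_{k=1}^{p-1} (k/p) ζ^k is the quadratic Gauss sum and τ̄_p is its complex conjugate. -/

import Mathlib

open Complex Finset Polynomial Matrix

theorem reindex_aux (m : ℕ) (G : ℕ → ℕ → ℂ) :
    ∏ i : Fin m, ∏ j ∈ Finset.Ioi i, G ((i:ℕ)+1) ((j:ℕ)+1)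
      = ∏ k ∈ Finset.Icc 1 m, ∏ j ∈ Finset.Icc 1 (k-1), G j k := by
  rw [Finset.prod_sigma', Finset.prod_sigma']
  refine Finset.prod_bij (fun a _ => ⟨(a.2:ℕ)+1, (a.1:ℕ)+1⟩) ?_ ?_ ?_ ?_
  · rintro ⟨a, b⟩ h
    simp only [Finset.mem_sigma, Finset.mem_univ, Finset.mem_Ioi, Fin.lt_def] at h
    simp only [Finset.mem_sigma, Finset.mem_Icc]
    omega
  · rintro ⟨a, b⟩ h ⟨c, d⟩ h' e
    simp only [Sigma.ext_iff, heq_eq_eq, Nat.add_right_cancel_iff, Fin.val_eq_val] at e ⊢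
    exact ⟨e.2, e.1⟩
  · rintro ⟨k, j⟩ h
    simp only [Finset.mem_sigma, Finset.mem_Icc] at h
    refine ⟨⟨⟨j - 1, by omega⟩, ⟨k - 1, by omega⟩⟩, ?_, ?_⟩
    · simp only [Finset.mem_sigma, Finset.mem_univ, Finset.mem_Ioi, Fin.mk_lt_mk, true_and]
      omega
    · simp only [Sigma.ext_iff, heq_eq_eq]
      omega
  · rintro ⟨a, b⟩ h; rfl


theorem pow_mod_aux {ξ : ℂ} {p : ℕ} (hξp : ξ ^ p = 1) (a : ℕ) : ξ ^ a = ξ ^ (a % p) := by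
  conv_lhs => rw [← Nat.div_add_mod a p]
  rw [pow_add, pow_mul, hξp, one_pow, one_mul]

theorem zmod_sum_aux (p : ℕ) [hp : Fact p.Prime] (f : ZMod p → ℂ) :
    ∑ a : ZMod p, f a = f 0 + ∑ k ∈ Finset.Icc 1 (p - 1), f (k : ZMod p) := by
  have hp1 : 1 ≤ p := hp.out.one_lt.le
  have h1 : ∑ a : ZMod p, f a = ∑ k ∈ Finset.range p, f (k : ZMod p) := by
    refine (Finset.sum_nbij' (fun a => (ZMod.val a)) (fun k => (k : ZMod p)) ?_ ?_ ?_ ?_ ?_).symm.symm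
    · intro a _; exact Finset.mem_range.mpr (ZMod.val_lt a)
    · intro k _; exact Finset.mem_univ _
    · intro a _; exact ZMod.natCast_rightInverse a
    · intro k hk; exact ZMod.val_cast_of_lt (Finset.mem_range.mp hk)
    · intro a _; rw [ZMod.natCast_rightInverse a]
  have h2 : Finset.Icc 1 (p-1) = Finset.Ico 1 p := by
    rw [← Finset.Ico_add_one_right_eq_Icc]
    congr 1
    omega
  rw [h1, Finset.range_eq_Ico, Finset.sum_eq_sum_Ico_succ_bot (by omega) _, h2]
  norm_num

theorem NT_aux (p : ℕ) [hp : Fact p.Prime] (hp3 : 3 < p) (ξ : ℂ)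
    (hξp : ξ ^ p = 1) (hξ1 : ξ ≠ 1) :
    ∑ k ∈ Finset.Icc 1 (p - 1), (legendreSym p (k : ℤ) : ℂ) * ξ ^ k
      = 2 * (∑ j ∈ Finset.range ((p-1)/2), ξ ^ ((j+1)^2)) + 1 := by
  have hp2 : p ≠ 2 := by omega
  have hoddp : p % 2 = 1 := by
    obtain ⟨t, ht⟩ := hp.out.odd_of_ne_two hp2
    omega
  set n := (p-1)/2 with hndef
  have hpn : p = 2 * n + 1 := by omega
  -- geometric sum
  have hgeom : ∑ k ∈ Finset.range p, ξ ^ k = 0 := by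
    have h := geom_sum_mul ξ p
    rw [hξp, sub_self] at h
    rcases mul_eq_zero.mp h with h' | h'
    · exact h'
    · exact (hξ1 (sub_eq_zero.mp h')).elim
  have hIccIco : Finset.Icc 1 (p-1) = Finset.Ico 1 p := by
    rw [← Finset.Ico_add_one_right_eq_Icc]; congr 1; omega
  have hsum1 : ∑ k ∈ Finset.Icc 1 (p-1), ξ ^ k = -1 := by
    rw [Finset.range_eq_Ico, Finset.sum_eq_sum_Ico_succ_bot (by omega) _] at hgeom
    rw [hIccIco]
    simp only [pow_zero] at hgeom
    rw [show (0+1) = 1 from rfl] at hgeom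
    linear_combination hgeom
  have key : ∀ b : ZMod p, ((Finset.univ.filter fun x : ZMod p => x^2 = b).card : ℂ)
      = ((quadraticChar (ZMod p) b : ℤ) : ℂ) + 1 := by
    intro b
    have h := quadraticChar_card_sqrts
      (by rw [ZMod.ringChar_zmod_n]; omega : ringChar (ZMod p) ≠ 2) b
    rw [show {x : ZMod p | x ^ 2 = b}.toFinset = Finset.univ.filter fun x : ZMod p => x^2 = b by
      ext x; simp] at h
    exact_mod_cast congrArg (Int.cast : ℤ → ℂ) h
  have hsq : ∑ a : ZMod p, ξ^((a^2 : ZMod p)).val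
      = ∑ b : ZMod p, (((quadraticChar (ZMod p) b : ℤ) : ℂ) + 1) * ξ^(b.val) := by
    rw [← Finset.sum_fiberwise_of_maps_to (g := fun a : ZMod p => a^2) (t := Finset.univ)
      (fun a _ => Finset.mem_univ _)]
    refine Finset.sum_congr rfl fun b _ => ?_
    calc ∑ a ∈ Finset.univ.filter (fun a : ZMod p => a^2 = b), ξ^((a^2 : ZMod p)).val
        = ∑ _a ∈ Finset.univ.filter (fun a : ZMod p => a^2 = b), ξ^(b.val) := by
          refine Finset.sum_congr rfl fun a ha => ?_
          rw [(Finset.mem_filter.mp ha).2]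
      _ = _ := by rw [Finset.sum_const, nsmul_eq_mul, key b]
  rw [zmod_sum_aux, zmod_sum_aux] at hsq
  simp only [ne_eq, OfNat.ofNat_ne_zero, not_false_eq_true, zero_pow, ZMod.val_zero, pow_zero,
    quadraticChar_zero] at hsq
  have hL : ∑ k ∈ Finset.Icc 1 (p-1), ξ^((((k : ZMod p))^2 : ZMod p)).val
      = ∑ k ∈ Finset.Icc 1 (p-1), ξ^(k^2) := by
    refine Finset.sum_congr rfl fun k _ => ?_
    rw [← Nat.cast_pow, ZMod.val_natCast, ← pow_mod_aux hξp]
  have hR : ∑ k ∈ Finset.Icc 1 (p-1), (((quadraticChar (ZMod p) (k : ZMod p) : ℤ) : ℂ) + 1) * ξ^(((k : ZMod p)).val)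
      = ∑ k ∈ Finset.Icc 1 (p-1), ((legendreSym p (k : ℤ) : ℂ) * ξ^k + ξ^k) := by
    refine Finset.sum_congr rfl fun k _ => ?_
    rw [ZMod.val_natCast, ← pow_mod_aux hξp]
    have : legendreSym p (k : ℤ) = quadraticChar (ZMod p) (k : ZMod p) := by
      unfold legendreSym
      push_cast
      rfl
    rw [this]
    ring
  rw [hL, hR, Finset.sum_add_distrib, hsum1] at hsq
  -- halving of the sum of ξ^(k^2)
  have hhalf : ∑ k ∈ Finset.Icc 1 (p-1), ξ^(k^2) = 2 * ∑ j ∈ Finset.range n, ξ^((j+1)^2) := by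
    have hsplit := Finset.sum_Ioc_consecutive (fun k => ξ^(k^2))
      (show 0 ≤ n by omega) (show n ≤ p - 1 by omega)
    have hIccIoc : Finset.Icc 1 (p-1) = Finset.Ioc 0 (p-1) := by
      ext x; simp only [Finset.mem_Icc, Finset.mem_Ioc]; omega
    have hpair : ∑ k ∈ Finset.Ioc n (p-1), ξ^(k^2) = ∑ k ∈ Finset.Ioc 0 n, ξ^(k^2) := by
      refine Finset.sum_nbij' (fun k => p - k) (fun k => p - k) ?_ ?_ ?_ ?_ ?_
      · intro k hk; simp only [Finset.mem_Ioc] at *; omega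
      · intro k hk; simp only [Finset.mem_Ioc] at *; omega
      · intro k hk; simp only [Finset.mem_Ioc] at hk; omega
      · intro k hk; simp only [Finset.mem_Ioc] at hk; omega
      · intro k hk
        simp only [Finset.mem_Ioc] at hk
        obtain ⟨d, hd⟩ : ∃ d, p = k + d := ⟨p - k, by omega⟩
        have hpk : p - k = d := by omega
        show ξ ^ k ^ 2 = ξ ^ (p - k) ^ 2
        rw [hpk]
        have hexp : ξ^(d^2) * (ξ^p)^(2*k) = ξ^(k^2) * (ξ^p)^p := by
          rw [← pow_mul, ← pow_add, ← pow_mul, ← pow_add]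
          congr 1
          subst hd; ring
        rw [hξp, one_pow, one_pow, mul_one, mul_one] at hexp
        exact hexp.symm
    have hrange : ∑ k ∈ Finset.Ioc 0 n, ξ^(k^2) = ∑ j ∈ Finset.range n, ξ^((j+1)^2) := by
      refine Finset.sum_nbij' (fun k => k - 1) (fun j => j + 1) ?_ ?_ ?_ ?_ ?_
      · intro k hk; simp only [Finset.mem_Ioc, Finset.mem_range] at *; omega
      · intro j hj; simp only [Finset.mem_Ioc, Finset.mem_range] at *; omega
      · intro k hk; simp only [Finset.mem_Ioc] at hk; omega
      · intro j hj; simp only [Finset.mem_range] at hj; omega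
      · intro k hk
        simp only [Finset.mem_Ioc] at hk
        show ξ ^ k ^ 2 = ξ ^ (k - 1 + 1) ^ 2
        congr 2
        omega
    rw [hIccIoc, ← hsplit, hpair, hrange]
    ring
  rw [hhalf] at hsq
  linear_combination -hsq


-- product over Ioi of castSucc
theorem prod_Ioi_castSucc_aux {M : Type*} [CommMonoid M] {m : ℕ} (i : Fin m) (f : Fin (m+1) → M) :
    ∏ j ∈ Finset.Ioi (Fin.castSucc i), f j
      = (∏ j ∈ Finset.Ioi i, f (Fin.castSucc j)) * f (Fin.last m) := by
  have h : Finset.Ioi (Fin.castSucc i) =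
      insert (Fin.last m) ((Finset.Ioi i).map Fin.castSuccEmb) := by
    ext j
    simp only [Finset.mem_Ioi, Finset.mem_insert, Finset.mem_map, Fin.castSuccEmb]
    constructor
    · intro hj
      by_cases hlast : j = Fin.last m
      · exact Or.inl hlast
      · refine Or.inr ⟨⟨(j:ℕ), ?_⟩, ?_, ?_⟩
        · have := j.isLt
          have : (j : ℕ) ≠ m := fun h => hlast (Fin.ext h)
          omega
        · rw [Fin.lt_def] at hj ⊢
          exact hj
        · apply Fin.ext; simp
    · rintro (rfl | ⟨a, ha, rfl⟩)
      · exact Fin.castSucc_lt_last i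
      · show Fin.castSucc i < Fin.castSucc a
        exact Fin.castSucc_lt_castSucc_iff.mpr ha
  have hnot : Fin.last m ∉ (Finset.Ioi i).map Fin.castSuccEmb := by
    simp only [Finset.mem_map]
    rintro ⟨a, _, ha⟩
    rw [Fin.coe_castSuccEmb] at ha
    exact absurd (ha ▸ Fin.castSucc_lt_last a) (lt_irrefl _)
  rw [h, Finset.prod_insert hnot, Finset.prod_map]
  simp only [Fin.coe_castSuccEmb]
  exact mul_comm _ _

theorem derivative_finset_prod {ι : Type*} [DecidableEq ι] (s : Finset ι) (f : ι → Polynomial ℂ) :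
    Polynomial.derivative (∏ i ∈ s, f i)
      = ∑ i ∈ s, (∏ j ∈ s.erase i, f j) * Polynomial.derivative (f i) := by
  induction s using Finset.induction_on with
  | empty => simp
  | @insert a s h ih =>
    rw [Finset.prod_insert h, Polynomial.derivative_mul, Finset.sum_insert h,
      Finset.erase_insert h, ih, Finset.mul_sum]
    congr 1
    · exact mul_comm _ _
    · refine Finset.sum_congr rfl fun i hi => ?_
      rw [Finset.erase_insert_of_ne (by rintro rfl; exact h hi),
        Finset.prod_insert (fun hmem => h (Finset.mem_of_mem_erase hmem))]
      ring

theorem schur_aux (m : ℕ) (x : Fin (m+1) → ℂ) :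
    (Matrix.of fun i j : Fin (m+1) => if (i:ℕ) = 0 then (1:ℂ) else x j ^ ((i:ℕ)+1)).det
    = (∑ j, ∏ k ∈ Finset.univ.erase j, x k) *
        ∏ i, ∏ j ∈ Finset.Ioi i, (x j - x i) := by
  classical
  set v : Fin (m+2) → ℂ[X] := Fin.snoc (fun i => Polynomial.C (x i)) Polynomial.X with hv
  have hvc : ∀ i : Fin (m+1), v (Fin.castSucc i) = Polynomial.C (x i) := fun i => by
    simp [hv]
  have hvl : v (Fin.last (m+1)) = Polynomial.X := by simp [hv]
  set P : ℂ := ∏ i, ∏ j ∈ Finset.Ioi i, (x j - x i) with hP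
  set E : ℂ := ∑ j, ∏ k ∈ Finset.univ.erase j, x k with hE
  -- Step A
  have hA : (Matrix.vandermonde v).det
      = Polynomial.C P * ∏ i : Fin (m+1), (Polynomial.X - Polynomial.C (x i)) := by
    rw [Matrix.det_vandermonde, Fin.prod_univ_castSucc]
    have hlast : ∏ j ∈ Finset.Ioi (Fin.last (m+1)), (v j - v (Fin.last (m+1))) = 1 := by
      have : Finset.Ioi (Fin.last (m+1)) = (∅ : Finset (Fin (m+2))) := by
        ext y
        simp only [Finset.mem_Ioi, Finset.notMem_empty, iff_false, not_lt]
        exact Fin.le_last y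
      rw [this, Finset.prod_empty]
    rw [hlast, mul_one]
    have hstep : ∀ i' : Fin (m+1),
        ∏ j ∈ Finset.Ioi (Fin.castSucc i'), (v j - v (Fin.castSucc i'))
          = (∏ j ∈ Finset.Ioi i', Polynomial.C (x j - x i')) *
            (Polynomial.X - Polynomial.C (x i')) := by
      intro i'
      rw [prod_Ioi_castSucc_aux i' (fun j => v j - v (Fin.castSucc i')), hvl, hvc]
      congr 1
      refine Finset.prod_congr rfl fun j _ => ?_
      rw [hvc]
      exact (map_sub Polynomial.C _ _).symm
    calc ∏ i' : Fin (m+1), ∏ j ∈ Finset.Ioi (Fin.castSucc i'), (v j - v (Fin.castSucc i'))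
        = ∏ i' : Fin (m+1), ((∏ j ∈ Finset.Ioi i', Polynomial.C (x j - x i')) *
            (Polynomial.X - Polynomial.C (x i'))) := Finset.prod_congr rfl fun i' _ => hstep i'
      _ = (∏ i' : Fin (m+1), ∏ j ∈ Finset.Ioi i', Polynomial.C (x j - x i')) *
            ∏ i' : Fin (m+1), (Polynomial.X - Polynomial.C (x i')) := Finset.prod_mul_distrib
      _ = Polynomial.C P * ∏ i' : Fin (m+1), (Polynomial.X - Polynomial.C (x i')) := by
        rw [hP, map_prod]
        congr 1
        refine Finset.prod_congr rfl fun i' _ => ?_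
        rw [map_prod]
  -- Step B : Laplace expansion along the last row
  set D : Fin (m+2) → ℂ := fun j =>
    (Matrix.of fun a b : Fin (m+1) => x a ^ ((j.succAbove b : ℕ))).det with hD
  have hB : (Matrix.vandermonde v).det
      = ∑ j : Fin (m+2), (-1:ℂ[X])^((m+1) + (j:ℕ)) *
          Polynomial.X^(j:ℕ) * Polynomial.C (D j) := by
    rw [Matrix.det_succ_row (Matrix.vandermonde v) (Fin.last (m+1))]
    refine Finset.sum_congr rfl fun j _ => ?_
    have h1 : Matrix.vandermonde v (Fin.last (m+1)) j = Polynomial.X ^ (j:ℕ) := by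
      rw [Matrix.vandermonde_apply, hvl]
    have h2 : ((Matrix.vandermonde v).submatrix (Fin.last (m+1)).succAbove j.succAbove).det
        = Polynomial.C (D j) := by
      have hmat : (Matrix.vandermonde v).submatrix (Fin.last (m+1)).succAbove j.succAbove
          = (Matrix.of fun a b : Fin (m+1) => x a ^ ((j.succAbove b : ℕ))).map Polynomial.C := by
        apply Matrix.ext
        intro a b
        simp only [Matrix.submatrix_apply, Matrix.vandermonde_apply, Fin.succAbove_last,
          Matrix.map_apply, Matrix.of_apply]
        rw [hvc, map_pow]
      rw [hmat, hD]
      exact ((Polynomial.C : ℂ →+* Polynomial ℂ).map_det _).symm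
    rw [h1, h2, Fin.val_last]
  -- coefficient of X^1 on side B
  have hcoeffB : ((Matrix.vandermonde v).det).coeff 1 = (-1:ℂ)^(m+1+1) * D 1 := by
    rw [hB, Polynomial.finset_sum_coeff]
    have hterm : ∀ j : Fin (m+2),
        ((-1:ℂ[X])^((m+1) + (j:ℕ)) * Polynomial.X^(j:ℕ) * Polynomial.C (D j)).coeff 1
          = if j = (1 : Fin (m+2)) then (-1:ℂ)^(m+1+(j:ℕ)) * D j else 0 := by
      intro j
      have hre : ((-1:ℂ[X])^((m+1) + (j:ℕ)) * Polynomial.X^(j:ℕ) * Polynomial.C (D j))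
          = Polynomial.C ((-1)^((m+1)+(j:ℕ)) * D j) * Polynomial.X^(j:ℕ) := by
        have hC1 : ((-1 : Polynomial ℂ)) = Polynomial.C (-1) := by
          rw [map_neg, Polynomial.C_1]
        rw [hC1, ← map_pow, _root_.map_mul, map_pow]
        ring
      rw [hre, Polynomial.coeff_C_mul, Polynomial.coeff_X_pow]
      by_cases hj : (j:ℕ) = 1
      · have hj' : j = (1 : Fin (m+2)) := Fin.ext (by rw [Fin.val_one]; exact hj)
        rw [if_pos hj.symm, if_pos hj', mul_one]
      · have hj' : j ≠ (1 : Fin (m+2)) := fun h => hj (by rw [h, Fin.val_one])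
        rw [if_neg (fun h => hj h.symm), if_neg hj', mul_zero]
    rw [Finset.sum_congr rfl fun j _ => hterm j,
      Finset.sum_ite_eq' Finset.univ (1 : Fin (m+2)) _]
    simp [Fin.val_one]
  -- coefficient of X^1 on side A
  have hcoeffA : (Polynomial.C P * ∏ i : Fin (m+1),
      (Polynomial.X - Polynomial.C (x i))).coeff 1 = P * ((-1:ℂ)^m * E) := by
    rw [Polynomial.coeff_C_mul]
    congr 1
    have h3 : (∏ i : Fin (m+1), (Polynomial.X - Polynomial.C (x i))).coeff 1
        = (Polynomial.derivative (∏ i : Fin (m+1),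
            (Polynomial.X - Polynomial.C (x i)))).coeff 0 := by
      rw [Polynomial.coeff_derivative]
      simp
    rw [h3, Polynomial.coeff_zero_eq_eval_zero, derivative_finset_prod,
      Polynomial.eval_finset_sum]
    have h5 : ∀ i ∈ Finset.univ, Polynomial.eval 0
        ((∏ j ∈ Finset.univ.erase i, (Polynomial.X - Polynomial.C (x j))) *
          Polynomial.derivative (Polynomial.X - Polynomial.C (x i)))
        = (-1:ℂ)^m * ∏ k ∈ Finset.univ.erase i, x k := by
      intro i _
      rw [Polynomial.derivative_sub, Polynomial.derivative_X, Polynomial.derivative_C, sub_zero,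
        mul_one, Polynomial.eval_prod]
      have h6 : ∀ j ∈ Finset.univ.erase i,
          Polynomial.eval 0 (Polynomial.X - Polynomial.C (x j)) = (-1) * x j := by
        intro j _
        rw [Polynomial.eval_sub, Polynomial.eval_X, Polynomial.eval_C, zero_sub, neg_eq_neg_one_mul]
      rw [Finset.prod_congr rfl h6, Finset.prod_mul_distrib, Finset.prod_const,
        Finset.card_erase_of_mem (Finset.mem_univ _), Finset.card_univ, Fintype.card_fin]
      norm_num
    rw [Finset.sum_congr rfl h5, ← Finset.mul_sum, hE]
  -- combine the two computations
  have hsign : (-1:ℂ)^(m+1+1) = (-1:ℂ)^m := by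
    rw [pow_succ, pow_succ]
    ring
  have h4 : (-1:ℂ)^m * D 1 = (-1:ℂ)^m * (P * E) := by
    rw [← hsign, ← hcoeffB, hA, hcoeffA]
    ring
  have hDone : D 1 = E * P := by
    have := mul_left_cancel₀ (pow_ne_zero m (by norm_num : (-1:ℂ) ≠ 0)) h4
    rw [this]
    ring
  -- identify the original matrix with the transposed minor
  have hT : (Matrix.of fun i j : Fin (m+1) => if (i:ℕ) = 0 then (1:ℂ) else x j ^ ((i:ℕ)+1))
      = (Matrix.of fun a b : Fin (m+1) => x a ^ (((1:Fin (m+2)).succAbove b : ℕ)))ᵀ := by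
    apply Matrix.ext
    intro i j
    simp only [Matrix.transpose_apply, Matrix.of_apply]
    have hs : (((1:Fin (m+2)).succAbove i : ℕ)) = if (i:ℕ) = 0 then 0 else (i:ℕ)+1 := by
      rcases Nat.eq_zero_or_pos (i : ℕ) with h0 | h0
      · have hi : Fin.castSucc i < 1 := by
          rw [Fin.lt_def, Fin.val_one]
          simpa using h0
        rw [Fin.succAbove_of_castSucc_lt _ _ hi, if_pos h0, Fin.coe_castSucc, h0]
      · have hi : (1 : Fin (m+2)) ≤ Fin.castSucc i := by
          rw [Fin.le_def, Fin.val_one]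
          simp only [Fin.coe_castSucc]; omega
        rw [Fin.succAbove_of_le_castSucc _ _ hi, if_neg (by omega), Fin.val_succ]
    rw [hs]
    by_cases h : (i:ℕ) = 0 <;> simp [h]
  rw [hT, Matrix.det_transpose]
  exact hDone


theorem sq_sum_aux : ∀ N : ℕ, 6 * ∑ j ∈ Finset.range N, (j+1)^2 = N*(N+1)*(2*N+1) := by
  intro N
  induction N with
  | zero => simp
  | succ N ih =>
    rw [Finset.sum_range_succ, Nat.mul_add, ih]
    ring

/-- Let `p > 3` be a prime, `n = (p-1)/2`, `ζ = e^{2πi/p}`, and let `M` be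
the `n × n` matrix with first row `(1,…,1)` and `(i,j)` entry `ζ^{i·j²}` for `i ≥ 2`. Then
`det M = ((τ̄_p - 1)/2) ∏_{1≤j<k≤n} (ζ^{k²} - ζ^{j²})`, where
`τ_p = ∑_{k=1}^{p-1} (k/p) ζ^k` is the quadratic Gauss sum. -/
theorem stmt12 (p : ℕ) [hp : Fact p.Prime] (hp3 : 3 < p)
    (ζ : ℂ) (hζ : ζ = Complex.exp (2 * Real.pi * Complex.I / p))
    (τ : ℂ) (hτ : τ = ∑ k ∈ Finset.Icc 1 (p - 1), (legendreSym p (k : ℤ) : ℂ) * ζ ^ k) :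
    (Matrix.of fun i j : Fin ((p - 1) / 2) =>
        if (i : ℕ) + 1 = 1 then (1 : ℂ) else ζ ^ (((i : ℕ) + 1) * ((j : ℕ) + 1) ^ 2)).det
      = ((starRingEnd ℂ) τ - 1) / 2 *
          ∏ k ∈ Finset.Icc 1 ((p - 1) / 2), ∏ j ∈ Finset.Icc 1 (k - 1),
            (ζ ^ (k ^ 2) - ζ ^ (j ^ 2)) := by
  have hp1 : 1 < p := hp.out.one_lt
  have hoddp : p % 2 = 1 := by
    obtain ⟨t, ht⟩ := hp.out.odd_of_ne_two (by omega)
    omega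
  obtain ⟨m, hm⟩ : ∃ m, (p-1)/2 = m+1 := ⟨(p-1)/2 - 1, by omega⟩
  have hpm : p = 2*(m+1)+1 := by omega
  -- primitive root facts
  have hζprim : IsPrimitiveRoot ζ p := by
    rw [hζ]
    exact Complex.isPrimitiveRoot_exp p (by omega)
  have hζp : ζ^p = 1 := hζprim.pow_eq_one
  have hζ1 : ζ ≠ 1 := by
    have := hζprim.pow_ne_one_of_pos_of_lt (l := 1) one_ne_zero hp1
    simpa using this
  have hconj : (starRingEnd ℂ) ζ = ζ⁻¹ := by
    rw [hζ, ← Complex.exp_conj]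
    rw [show (starRingEnd ℂ) (2 * Real.pi * Complex.I / p) = -(2 * Real.pi * Complex.I / p) by
      simp [map_div₀, map_ofNat, Complex.conj_ofReal]
      ring]
    rw [Complex.exp_neg]
  rw [hm]
  have hdet := schur_aux m (fun j => ζ ^ (((j:ℕ)+1)^2))
  have hMeq : (Matrix.of fun i j : Fin (m+1) =>
        if (i : ℕ) + 1 = 1 then (1 : ℂ) else ζ ^ (((i : ℕ) + 1) * ((j : ℕ) + 1) ^ 2))
      = Matrix.of fun i j : Fin (m+1) =>
        if (i:ℕ) = 0 then (1:ℂ) else (ζ ^ (((j:ℕ)+1)^2)) ^ ((i:ℕ)+1) := by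
    apply Matrix.ext
    intro i j
    simp only [Matrix.of_apply]
    by_cases h : (i:ℕ) = 0
    · rw [if_pos (by omega), if_pos h]
    · rw [if_neg (by omega), if_neg h, ← pow_mul, mul_comm]
  rw [hMeq, hdet]
  congr 1
  · -- the symmetric-function factor
    have hprod1 : ∏ k : Fin (m+1), ζ ^ (((k:ℕ)+1)^2) = 1 := by
      rw [Finset.prod_pow_eq_pow_sum]
      rw [Fin.sum_univ_eq_sum_range (fun k => (k+1)^2) (m+1)]
      obtain ⟨c, hc⟩ : p ∣ ∑ j ∈ Finset.range (m+1), (j+1)^2 := by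
        have h6 := sq_sum_aux (m+1)
        have hdvd6 : p ∣ 6 * ∑ j ∈ Finset.range (m+1), (j+1)^2 :=
          ⟨(m+1)*(m+2), by rw [h6, hpm]; ring⟩
        have hcop : Nat.Coprime p 6 := by
          refine (Nat.Prime.coprime_iff_not_dvd hp.out).mpr (fun hdvd => ?_)
          have h6 := Nat.le_of_dvd (by norm_num) hdvd
          have hp5 : p = 5 := by omega
          rw [hp5] at hdvd
          omega
        exact (Nat.Coprime.dvd_of_dvd_mul_left hcop hdvd6)
      rw [hc, pow_mul, hζp, one_pow]
    have hterm : ∀ j : Fin (m+1),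
        ∏ k ∈ Finset.univ.erase j, ζ ^ (((k:ℕ)+1)^2) = (ζ⁻¹) ^ (((j:ℕ)+1)^2) := by
      intro j
      have h := Finset.mul_prod_erase Finset.univ
        (fun k : Fin (m+1) => ζ ^ (((k:ℕ)+1)^2)) (Finset.mem_univ j)
      rw [hprod1] at h
      rw [inv_pow]
      exact eq_inv_of_mul_eq_one_left (by rw [mul_comm]; exact h)
    rw [Finset.sum_congr rfl (fun j _ => hterm j)]
    have hNT := NT_aux p hp3 (ζ⁻¹) (by rw [inv_pow, hζp, inv_one])
      (fun h => hζ1 (inv_eq_one.mp h))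
    rw [hm] at hNT
    have hconjτ : (starRingEnd ℂ) τ
        = ∑ k ∈ Finset.Icc 1 (p-1), (legendreSym p (k:ℤ) : ℂ) * (ζ⁻¹)^k := by
      rw [hτ, map_sum]
      refine Finset.sum_congr rfl fun k _ => ?_
      rw [_root_.map_mul, map_pow, hconj]
      congr 1
      exact map_intCast (starRingEnd ℂ) _
    rw [Fin.sum_univ_eq_sum_range (fun j => (ζ⁻¹)^((j+1)^2)) (m+1)]
    rw [hconjτ, hNT]
    ring
  · exact reindex_aux (m+1) (fun a b => ζ^(b^2) - ζ^(a^2))
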